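/- Let G be a graph and let (T, χ) be a treecut decomposition of G of width at most ω and height at most d such that χ(t) ≠ ∅ for each leaf t of T. Define P_1 = ∅ and, for every i with 2 ≤ i ≤ h(T) + 1, P_i = { V_t : t ∈ V(T) and the height of t in T equals h(T) − i + 2 }, where h(T) is the height of T. Then (P_1,…,P_{h(T)+1}) is a derivation of G of width at most ω and length at most d + 1. -/

import Mathlib

/-- `a` is the parent of `b` in the rooted tree/forest given by `par`. -/
def ParentRel {τ : Type} (par : τ → Option τ) (a b : τ) : Prop := par b = some a

/-- `a` is a strict ancestor of `b`. -/
def Anc {τ : Type} (par : τ → Option τ) : τ → τ → Prop :=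
  Relation.TransGen (ParentRel par)

/-- The data of a treecut decomposition: a parent function on the node type `τ`
(describing the rooted tree) together with a labelling `χ` of nodes by vertex sets. -/
structure PreDecomp (V τ : Type) where
  parent : τ → Option τ
  χ : τ → Set V

/-- `(T, χ)` is a treecut decomposition: the tree is acyclic with a unique root,
and the sets `χ t` form a near-partition of `V` (pairwise disjoint, covering,
empty sets allowed). -/
def IsTCDecomp {V τ : Type} (D : PreDecomp V τ) : Prop :=
  (∀ t, ¬ Anc D.parent t t) ∧ (∃! r, D.parent r = none) ∧ (∀ v : V, ∃! t, v ∈ D.χ t)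

/-- The nodes in the subtree rooted at `t` (including `t` itself). -/
def subtreeNodes {τ : Type} (par : τ → Option τ) (t : τ) : Set τ :=
  {s | s = t ∨ Anc par t s}

/-- `V_t`: the union of `χ s` over the nodes `s` of the subtree rooted at `t`. -/
def subtreeSet {V τ : Type} (D : PreDecomp V τ) (t : τ) : Set V :=
  ⋃ s ∈ subtreeNodes D.parent t, D.χ s

/-- The number of edges of `G` with exactly one endpoint in `S`
(each such edge is counted once, as the ordered pair (inside, outside)). -/
noncomputable def cutsize {V : Type} (G : SimpleGraph V) (S : Set V) : ℕ :=
  {p : V × V | G.Adj p.1 p.2 ∧ p.1 ∈ S ∧ p.2 ∉ S}.ncard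

/-- The adhesion of a node `t`: the number of edges leaving `V_t`. -/
noncomputable def adhesion {V τ : Type} (G : SimpleGraph V) (D : PreDecomp V τ) (t : τ) : ℕ :=
  cutsize G (subtreeSet D t)

/-- The torsowidth of `t`: `|χ t|` plus the number of neighbours of `t` in the tree. -/
noncomputable def torsowidth {V τ : Type} (D : PreDecomp V τ) (t : τ) : ℕ :=
  (D.χ t).ncard + {s | D.parent s = some t ∨ D.parent t = some s}.ncard

/-- The treecut decomposition has width at most `w`. -/
def WidthLE {V τ : Type} (G : SimpleGraph V) (D : PreDecomp V τ) (w : ℕ) : Prop :=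
  ∀ t, adhesion G D t ≤ w ∧ torsowidth D t ≤ w

/-- The height of node `t`: the number of nodes on the path from the root to `t`,
i.e. one plus the number of strict ancestors of `t`. -/
noncomputable def nodeDepth {τ : Type} (par : τ → Option τ) (t : τ) : ℕ :=
  Nat.card {a // Anc par a t} + 1

/-- The children of `p` at level `i`: the sets of level `i - 1` contained in `p`. -/
def childrenAt {V : Type} (P : ℕ → Set (Set V)) (i : ℕ) (p : Set V) : Set (Set V) :=
  {c ∈ P (i - 1) | c ⊆ p}

/-- `χ_i(p)`: the set `p` minus the union of its children at level `i`. -/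
def bagAt {V : Type} (P : ℕ → Set (Set V)) (i : ℕ) (p : Set V) : Set V :=
  p \ ⋃₀ childrenAt P i p

/-- `(P 1, …, P l)` is a derivation of the vertex set `V`:
each level is a weak partition (nonempty, pairwise disjoint sets),
`P 1 = ∅`, `P l = {V}`, and each level refines the next one. -/
def IsDerivation {V : Type} (l : ℕ) (P : ℕ → Set (Set V)) : Prop :=
  (∀ i, 1 ≤ i → i ≤ l → (∀ p ∈ P i, p.Nonempty) ∧ (P i).PairwiseDisjoint id) ∧
  P 1 = ∅ ∧ P l = {Set.univ} ∧
  (∀ i, 1 ≤ i → i < l → ∀ p ∈ P i, ∃ q ∈ P (i + 1), p ⊆ q)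

/-- `tor_i(p)` for a derivation of length `l`. -/
noncomputable def torAt {V : Type} (l : ℕ) (P : ℕ → Set (Set V)) (i : ℕ) (p : Set V) : ℕ :=
  (bagAt P i p).ncard + (childrenAt P i p).ncard + (if i = l then 0 else 1)

/-- The derivation has width at most `w`: for every level `i` and every `p ∈ P i`,
both `|δ_G(p)|` and `tor_i(p)` are at most `w`. -/
def DerWidthLE {V : Type} (G : SimpleGraph V) (l : ℕ) (P : ℕ → Set (Set V)) (w : ℕ) : Prop :=
  ∀ i, 1 ≤ i → i ≤ l → ∀ p ∈ P i, cutsize G p ≤ w ∧ torAt l P i p ≤ w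

/-- The height of the tree: the maximal height of a node. -/
noncomputable def treeHeight {τ : Type} (par : τ → Option τ) : ℕ := ⨆ t, nodeDepth par t

/-- The sequence of weak partitions obtained from a treecut decomposition `D`:
level `i` consists of the sets `V_t` for the nodes `t` of height `h(T) - i + 2`. -/
def levelSets {V τ : Type} (D : PreDecomp V τ) : ℕ → Set (Set V) :=
  fun i => {S | ∃ t, nodeDepth D.parent t = treeHeight D.parent + 2 - i ∧ S = subtreeSet D t}


/-! ### Auxiliary lemmas -/

open Relation

section TreeAux
variable {τ : Type} [Finite τ] {par : τ → Option τ}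

set_option linter.unusedSectionVars false

lemma anc_iff_eq_or {a s c : τ} (hc : par c = some s) :
    Anc par a c ↔ a = s ∨ Anc par a s := by
  constructor
  · intro h
    obtain ⟨b, hab, hbc⟩ := Relation.TransGen.tail'_iff.mp h
    have hbc' : par c = some b := hbc
    have hb : b = s := Option.some.inj (hbc'.symm.trans hc)
    subst hb
    rcases Relation.reflTransGen_iff_eq_or_transGen.mp hab with h1 | h1
    · exact Or.inl h1.symm
    · exact Or.inr h1
  · rintro (rfl | h)
    · exact Relation.TransGen.single hc
    · exact h.tail hc

lemma depth_child (hacyc : ∀ t, ¬ Anc par t t) {c s : τ} (hc : par c = some s) :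
    nodeDepth par c = nodeDepth par s + 1 := by
  have hset : {a | Anc par a c} = insert s {a | Anc par a s} := by
    ext a
    simp only [Set.mem_setOf_eq, Set.mem_insert_iff]
    exact anc_iff_eq_or hc
  have h1 : Nat.card {a // Anc par a c} = {a | Anc par a c}.ncard :=
    Nat.card_coe_set_eq _
  have h2 : Nat.card {a // Anc par a s} = {a | Anc par a s}.ncard :=
    Nat.card_coe_set_eq _
  have hns : s ∉ {a | Anc par a s} := hacyc s
  unfold nodeDepth
  rw [h1, h2, hset, Set.ncard_insert_of_notMem hns (Set.toFinite _)]

lemma anc_depth_lt (hacyc : ∀ t, ¬ Anc par t t) {a b : τ} (h : Anc par a b) :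
    nodeDepth par a < nodeDepth par b := by
  induction h with
  | single h => rw [depth_child hacyc h]; omega
  | tail _ h ih => rw [depth_child hacyc h]; omega

lemma rt_depth_le (hacyc : ∀ t, ¬ Anc par t t) {a b : τ}
    (h : ReflTransGen (ParentRel par) a b) : nodeDepth par a ≤ nodeDepth par b := by
  rcases Relation.reflTransGen_iff_eq_or_transGen.mp h with rfl | h
  · exact le_rfl
  · exact (anc_depth_lt hacyc h).le

lemma rt_eq_of_depth_eq (hacyc : ∀ t, ¬ Anc par t t) {a b : τ}
    (h : ReflTransGen (ParentRel par) a b) (hd : nodeDepth par a = nodeDepth par b) :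
    a = b := by
  rcases Relation.reflTransGen_iff_eq_or_transGen.mp h with rfl | h
  · rfl
  · exact absurd hd (anc_depth_lt hacyc h).ne

lemma rt_comparable {a b x : τ} (hax : ReflTransGen (ParentRel par) a x)
    (hbx : ReflTransGen (ParentRel par) b x) :
    ReflTransGen (ParentRel par) a b ∨ ReflTransGen (ParentRel par) b a := by
  induction hbx using Relation.ReflTransGen.head_induction_on with
  | refl => exact Or.inl hax
  | head h' h ih =>
    rename_i b' c
    rcases ih with h1 | h1
    · rcases Relation.reflTransGen_iff_eq_or_transGen.mp h1 with rfl | h1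
      · exact Or.inr (Relation.ReflTransGen.single h')
      · obtain ⟨y, hay, hyc⟩ := Relation.TransGen.tail'_iff.mp h1
        have hyc' : par c = some y := hyc
        have h'' : par c = some b' := h'
        have : y = b' := Option.some.inj (hyc'.symm.trans h'')
        subst this
        exact Or.inl hay
    · exact Or.inr (Relation.ReflTransGen.head h' h1)

lemma exists_root_rt (hacyc : ∀ t, ¬ Anc par t t) (t : τ) :
    ∃ a, par a = none ∧ ReflTransGen (ParentRel par) a t := by
  have key : ∀ n t, nodeDepth par t ≤ n →
      ∃ a, par a = none ∧ ReflTransGen (ParentRel par) a t := by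
    intro n
    induction n with
    | zero => intro t ht; exact absurd ht (by unfold nodeDepth; omega)
    | succ n ih =>
      intro t ht
      cases h : par t with
      | none => exact ⟨t, h, Relation.ReflTransGen.refl⟩
      | some s =>
        have hd := depth_child hacyc h
        obtain ⟨a, ha, hrt⟩ := ih s (by omega)
        exact ⟨a, ha, hrt.tail h⟩
  exact key (nodeDepth par t) t le_rfl

lemma depth_one_of_root {r : τ} (hr : par r = none) :
    nodeDepth par r = 1 := by
  have hempty : {a | Anc par a r} = ∅ := by
    ext a
    simp only [Set.mem_setOf_eq, Set.mem_empty_iff_false, iff_false]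
    intro h
    obtain ⟨b, _, hbc⟩ := Relation.TransGen.tail'_iff.mp h
    rw [ParentRel, hr] at hbc
    cases hbc
  have h1 : Nat.card {a // Anc par a r} = {a | Anc par a r}.ncard :=
    Nat.card_coe_set_eq _
  unfold nodeDepth
  rw [h1, hempty, Set.ncard_empty]

lemma root_of_depth_one (hacyc : ∀ t, ¬ Anc par t t) {t : τ}
    (ht : nodeDepth par t = 1) : par t = none := by
  cases h : par t with
  | none => rfl
  | some s =>
    have := depth_child hacyc h
    unfold nodeDepth at this ht
    omega

lemma child_of_rt_depth (hacyc : ∀ t, ¬ Anc par t t) {t c : τ}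
    (h : ReflTransGen (ParentRel par) t c)
    (hd : nodeDepth par c = nodeDepth par t + 1) : par c = some t := by
  rcases Relation.reflTransGen_iff_eq_or_transGen.mp h with rfl | h
  · omega
  · obtain ⟨y, hty, hyc⟩ := Relation.TransGen.tail'_iff.mp h
    have hdy := depth_child hacyc hyc
    have : t = y := rt_eq_of_depth_eq hacyc hty (by omega)
    subst this
    exact hyc

lemma mem_subtreeNodes {s t : τ} :
    s ∈ subtreeNodes par t ↔ ReflTransGen (ParentRel par) t s := by
  rw [subtreeNodes, Set.mem_setOf_eq, Relation.reflTransGen_iff_eq_or_transGen]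
  rfl

end TreeAux

section DecompAux
variable {V τ : Type} [Finite V] [Finite τ] {D : PreDecomp V τ}

set_option linter.unusedSectionVars false

lemma mem_subtreeSet_iff {v : V} {t : τ} :
    v ∈ subtreeSet D t ↔ ∃ s, ReflTransGen (ParentRel D.parent) t s ∧ v ∈ D.χ s := by
  simp only [subtreeSet, Set.mem_iUnion, exists_prop]
  constructor
  · rintro ⟨s, hs, hv⟩; exact ⟨s, mem_subtreeNodes.mp hs, hv⟩
  · rintro ⟨s, hs, hv⟩; exact ⟨s, mem_subtreeNodes.mpr hs, hv⟩

lemma subtreeSet_mono {t s : τ} (h : ReflTransGen (ParentRel D.parent) t s) :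
    subtreeSet D s ⊆ subtreeSet D t := by
  intro v hv
  obtain ⟨u, hsu, hvu⟩ := mem_subtreeSet_iff.mp hv
  exact mem_subtreeSet_iff.mpr ⟨u, h.trans hsu, hvu⟩

lemma subtreeSet_nonempty (hacyc : ∀ t, ¬ Anc D.parent t t)
    (hleaf : ∀ t, (∀ s, D.parent s ≠ some t) → D.χ t ≠ ∅) (t : τ) :
    (subtreeSet D t).Nonempty := by
  obtain ⟨s, hsS, hmax⟩ := Set.Finite.exists_maximalFor (nodeDepth D.parent)
    (subtreeNodes D.parent t) (Set.toFinite _) ⟨t, Or.inl rfl⟩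
  have hlf : ∀ c, D.parent c ≠ some s := by
    intro c hc
    have hcS : c ∈ subtreeNodes D.parent t :=
      mem_subtreeNodes.mpr ((mem_subtreeNodes.mp hsS).tail hc)
    have hd := depth_child hacyc hc
    have := hmax hcS (by omega)
    omega
  obtain ⟨v, hv⟩ := Set.nonempty_iff_ne_empty.mpr (hleaf s hlf)
  exact ⟨v, mem_subtreeSet_iff.mpr ⟨s, mem_subtreeNodes.mp hsS, hv⟩⟩

lemma comparable_of_inter (hpart : ∀ v : V, ∃! t, v ∈ D.χ t) {t t' : τ}
    (h : (subtreeSet D t ∩ subtreeSet D t').Nonempty) :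
    ReflTransGen (ParentRel D.parent) t t' ∨ ReflTransGen (ParentRel D.parent) t' t := by
  obtain ⟨v, hv, hv'⟩ := h
  obtain ⟨s, hts, hvs⟩ := mem_subtreeSet_iff.mp hv
  obtain ⟨s', ht's', hvs'⟩ := mem_subtreeSet_iff.mp hv'
  have : s = s' := (hpart v).unique hvs hvs'
  subst this
  exact rt_comparable hts ht's'

lemma disjoint_of_same_depth (hacyc : ∀ t, ¬ Anc D.parent t t)
    (hpart : ∀ v : V, ∃! t, v ∈ D.χ t) {t t' : τ} (hne : t ≠ t')
    (hd : nodeDepth D.parent t = nodeDepth D.parent t') :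
    Disjoint (subtreeSet D t) (subtreeSet D t') := by
  by_contra hcon
  rcases comparable_of_inter hpart (Set.not_disjoint_iff_nonempty_inter.mp hcon) with h1 | h1
  · exact hne (rt_eq_of_depth_eq hacyc h1 hd)
  · exact hne (rt_eq_of_depth_eq hacyc h1 hd.symm).symm

end DecompAux

section MainAux
variable {V τ : Type} [Finite V] [Finite τ] {D : PreDecomp V τ}

set_option linter.unusedSectionVars false

lemma mem_levelSets {S : Set V} {i : ℕ} :
    S ∈ levelSets D i ↔ ∃ t, nodeDepth D.parent t = treeHeight D.parent + 2 - i ∧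
      S = subtreeSet D t := Iff.rfl

lemma childrenAt_eq (hacyc : ∀ t, ¬ Anc D.parent t t)
    (hpart : ∀ v : V, ∃! t, v ∈ D.χ t)
    (hleaf : ∀ t, (∀ s, D.parent s ≠ some t) → D.χ t ≠ ∅)
    {i : ℕ} {t : τ} (hi2 : 2 ≤ i) (hil : i ≤ treeHeight D.parent + 1)
    (hdt : nodeDepth D.parent t = treeHeight D.parent + 2 - i) :
    childrenAt (levelSets D) i (subtreeSet D t)
      = subtreeSet D '' {c | D.parent c = some t} := by
  ext q
  simp only [childrenAt, Set.mem_setOf_eq, Set.mem_image]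
  constructor
  · rintro ⟨⟨c, hdc, rfl⟩, hsub⟩
    have hdc' : nodeDepth D.parent c = nodeDepth D.parent t + 1 := by omega
    obtain ⟨v, hv⟩ := subtreeSet_nonempty hacyc hleaf c
    rcases comparable_of_inter hpart ⟨v, hv, hsub hv⟩ with h1 | h1
    · exact absurd (rt_depth_le hacyc h1) (by omega)
    · exact ⟨c, child_of_rt_depth hacyc h1 hdc', rfl⟩
  · rintro ⟨c, hc, rfl⟩
    have hdc := depth_child hacyc hc
    exact ⟨⟨c, by omega, rfl⟩, subtreeSet_mono (Relation.ReflTransGen.single hc)⟩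

lemma bagAt_eq (hacyc : ∀ t, ¬ Anc D.parent t t)
    (hpart : ∀ v : V, ∃! t, v ∈ D.χ t)
    (hleaf : ∀ t, (∀ s, D.parent s ≠ some t) → D.χ t ≠ ∅)
    {i : ℕ} {t : τ} (hi2 : 2 ≤ i) (hil : i ≤ treeHeight D.parent + 1)
    (hdt : nodeDepth D.parent t = treeHeight D.parent + 2 - i) :
    bagAt (levelSets D) i (subtreeSet D t) = D.χ t := by
  rw [bagAt, childrenAt_eq hacyc hpart hleaf hi2 hil hdt]
  ext v
  simp only [Set.mem_diff, Set.mem_sUnion, Set.mem_image, Set.mem_setOf_eq]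
  constructor
  · rintro ⟨hv, hnc⟩
    obtain ⟨s, hts, hvs⟩ := mem_subtreeSet_iff.mp hv
    rcases Relation.reflTransGen_iff_eq_or_transGen.mp hts with rfl | hts'
    · exact hvs
    · obtain ⟨c, htc, hcs⟩ := Relation.TransGen.head'_iff.mp hts'
      exact absurd ⟨subtreeSet D c, ⟨c, htc, rfl⟩,
        mem_subtreeSet_iff.mpr ⟨s, hcs, hvs⟩⟩ hnc
  · intro hv
    refine ⟨mem_subtreeSet_iff.mpr ⟨t, Relation.ReflTransGen.refl, hv⟩, ?_⟩
    rintro ⟨q, ⟨c, hc, rfl⟩, hvq⟩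
    obtain ⟨s, hcs, hvs⟩ := mem_subtreeSet_iff.mp hvq
    have hst : s = t := (hpart v).unique hvs hv
    subst hst
    have h1 := rt_depth_le hacyc hcs
    have h2 := depth_child hacyc hc
    omega

lemma ncard_children_image (hacyc : ∀ t, ¬ Anc D.parent t t)
    (hpart : ∀ v : V, ∃! t, v ∈ D.χ t)
    (hleaf : ∀ t, (∀ s, D.parent s ≠ some t) → D.χ t ≠ ∅) (t : τ) :
    (subtreeSet D '' {c | D.parent c = some t}).ncard
      = {c | D.parent c = some t}.ncard := by
  apply Set.ncard_image_of_injOn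
  intro c hc c' hc' he
  obtain ⟨v, hv⟩ := subtreeSet_nonempty hacyc hleaf c
  rcases comparable_of_inter hpart ⟨v, hv, he ▸ hv⟩ with h1 | h1
  · exact rt_eq_of_depth_eq hacyc h1
      (by rw [depth_child hacyc hc, depth_child hacyc hc'])
  · exact (rt_eq_of_depth_eq hacyc h1
      (by rw [depth_child hacyc hc, depth_child hacyc hc'])).symm

end MainAux

/-- From a treecut decomposition `(T, χ)` of `G` of width at most `ω` and height at most `d`
with `χ t ≠ ∅` for every leaf `t`, the sequence `P_1 = ∅`,
`P_i = { V_t | t a node of height h(T) - i + 2 }` (for `2 ≤ i ≤ h(T) + 1`)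
is a derivation of `G` of width at most `ω` and length at most `d + 1`. -/
theorem tc_decomp_to_derivation {V τ : Type} [Finite V] [Finite τ] (G : SimpleGraph V)
    (D : PreDecomp V τ) (hD : IsTCDecomp D) (ω d : ℕ)
    (hw : WidthLE G D ω) (hh : ∀ t, nodeDepth D.parent t ≤ d)
    (hleaf : ∀ t, (∀ s, D.parent s ≠ some t) → D.χ t ≠ ∅) :
    IsDerivation (treeHeight D.parent + 1) (levelSets D) ∧
    DerWidthLE G (treeHeight D.parent + 1) (levelSets D) ω ∧
    treeHeight D.parent + 1 ≤ d + 1 := by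
  obtain ⟨hacyc, hroot, hpart⟩ := hD
  obtain ⟨r, hr, hruniq⟩ := hroot
  have hτ : Nonempty τ := ⟨r⟩
  have hdle : ∀ t, nodeDepth D.parent t ≤ treeHeight D.parent := fun t =>
    le_ciSup (Set.Finite.bddAbove (Set.finite_range _)) t
  have hrt_root : ∀ t, ReflTransGen (ParentRel D.parent) r t := by
    intro t
    obtain ⟨a, ha, hrt⟩ := exists_root_rt hacyc t
    rwa [hruniq a ha] at hrt
  have hdr : nodeDepth D.parent r = 1 := depth_one_of_root hr
  have hone : 1 ≤ treeHeight D.parent := hdr ▸ hdle r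
  have hsubr : subtreeSet D r = Set.univ := by
    ext v
    simp only [Set.mem_univ, iff_true]
    obtain ⟨t, hvt, _⟩ := hpart v
    exact mem_subtreeSet_iff.mpr ⟨t, hrt_root t, hvt⟩
  refine ⟨⟨?_, ?_, ?_, ?_⟩, ?_, ?_⟩
  · -- weak partitions
    intro i _ _
    constructor
    · rintro p ⟨t, _, rfl⟩
      exact subtreeSet_nonempty hacyc hleaf t
    · rintro p ⟨t, hdt, rfl⟩ q ⟨t', hdt', rfl⟩ hne
      have htt : t ≠ t' := fun h => hne (by rw [h])
      exact disjoint_of_same_depth hacyc hpart htt (hdt.trans hdt'.symm)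
  · -- P 1 = ∅
    rw [Set.eq_empty_iff_forall_notMem]
    rintro S ⟨t, hdt, _⟩
    have := hdle t
    omega
  · -- P (h+1) = {univ}
    ext S
    simp only [Set.mem_singleton_iff]
    constructor
    · rintro ⟨t, hdt, rfl⟩
      have hdt1 : nodeDepth D.parent t = 1 := by omega
      have := hruniq t (root_of_depth_one hacyc hdt1)
      subst this
      exact hsubr
    · rintro rfl
      exact ⟨r, by omega, hsubr.symm⟩
  · -- refinement
    rintro i h1 hilt p ⟨t, hdt, rfl⟩
    have hdlet := hdle t
    have hi2 : 2 ≤ i := by omega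
    have hdt2 : 2 ≤ nodeDepth D.parent t := by omega
    cases hp0 : D.parent t with
    | none => rw [depth_one_of_root hp0] at hdt2; omega
    | some s =>
      have hds := depth_child hacyc hp0
      exact ⟨subtreeSet D s, ⟨s, by omega, rfl⟩,
        subtreeSet_mono (Relation.ReflTransGen.single hp0)⟩
  · -- width
    rintro i h1 hil p ⟨t, hdt, rfl⟩
    have hdlet := hdle t
    have hi2 : 2 ≤ i := by omega
    refine ⟨(hw t).1, ?_⟩
    rw [torAt, bagAt_eq hacyc hpart hleaf hi2 hil hdt,
      childrenAt_eq hacyc hpart hleaf hi2 hil hdt,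
      ncard_children_image hacyc hpart hleaf t]
    have htor := (hw t).2
    rw [torsowidth] at htor
    by_cases hiend : i = treeHeight D.parent + 1
    · have hdt1 : nodeDepth D.parent t = 1 := by omega
      have hproot : D.parent t = none := root_of_depth_one hacyc hdt1
      have hset : {s | D.parent s = some t ∨ D.parent t = some s}
          = {c | D.parent c = some t} := by
        ext s
        simp only [Set.mem_setOf_eq, hproot]
        constructor
        · rintro (h | h)
          · exact h
          · cases h
        · exact Or.inl
      rw [hset] at htor
      rw [if_pos hiend]
      omega
    · have hdt2 : 2 ≤ nodeDepth D.parent t := by omega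
      cases hp0 : D.parent t with
      | none => rw [depth_one_of_root hp0] at hdt2; omega
      | some p0 =>
        have hset : {s | D.parent s = some t ∨ D.parent t = some s}
            = insert p0 {c | D.parent c = some t} := by
          ext s
          simp only [Set.mem_setOf_eq, Set.mem_insert_iff, hp0]
          constructor
          · rintro (h | h)
            · exact Or.inr h
            · exact Or.inl (Option.some.inj h).symm
          · rintro (rfl | h)
            · exact Or.inr rfl
            · exact Or.inl h
        have hp0nc : p0 ∉ {c | D.parent c = some t} := by
          intro hc
          exact hacyc t ((Relation.TransGen.single
            (show ParentRel D.parent t p0 from hc)).tail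
            (show ParentRel D.parent p0 t from hp0))
        rw [hset, Set.ncard_insert_of_notMem hp0nc (Set.toFinite _)] at htor
        rw [if_neg hiend]
        omega
  · -- length bound
    have : treeHeight D.parent ≤ d := ciSup_le hh
    omega
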